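/- Let a > 1 and let q be an even positive integer. The sequence of functions Y_n : ℝ^d → ℂ defined by Y_n(x) = Σ_{k=0}^{n} C_k(n,a) · exp(i·(p·x)·(−i)^q·(1 − 2k/n)^q/ħ) converges pointwise on ℝ^d to Y(x) = exp(i·(p·x)·(−i·a)^q/ħ) as n → ∞, and the convergence is uniform on every compact subset of ℝ^d. -/

import Mathlib

open scoped RealInnerProductSpace
open Filter Finset

noncomputable def PP (a : ℝ) (n j : ℕ) : ℝ :=
  ∑ k ∈ Finset.range (n + 1),
    (n.choose k : ℝ) * ((1 + a) / 2) ^ (n - k) * ((1 - a) / 2) ^ k * ((n : ℝ) - 2 * k) ^ j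

noncomputable def cc (a : ℝ) (m : ℕ) : ℝ := (1 + a) / 2 + (-1 : ℝ) ^ m * ((1 - a) / 2)

lemma cc_even {a : ℝ} {m : ℕ} (h : Even m) : cc a m = 1 := by
  rw [cc, h.neg_one_pow]; ring

lemma cc_odd {a : ℝ} {m : ℕ} (h : Odd m) : cc a m = a := by
  rw [cc, h.neg_one_pow]; ring

lemma PP_rec (a : ℝ) (n j : ℕ) :
    PP a (n + 1) j = ∑ i ∈ range (j + 1), (j.choose i : ℝ) * cc a (j - i) * PP a n i := by
  have hsplit : PP a (n + 1) j
      = (∑ k ∈ range (n + 1), (n.choose k : ℝ) * ((1 + a) / 2) ^ (n + 1 - k) * ((1 - a) / 2) ^ k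
            * (((n : ℝ) + 1) - 2 * k) ^ j)
      + ∑ k ∈ range (n + 1), (n.choose k : ℝ) * ((1 + a) / 2) ^ (n - k) * ((1 - a) / 2) ^ (k + 1)
            * (((n : ℝ) + 1) - 2 * ((k : ℝ) + 1)) ^ j := by
    have hF : ∀ k, (((n + 1).choose (k + 1) : ℝ)) * ((1 + a) / 2) ^ (n - k)
          * ((1 - a) / 2) ^ (k + 1) * (((n : ℝ) + 1) - 2 * ((k : ℝ) + 1)) ^ j
        = ((n.choose (k + 1) : ℝ) * ((1 + a) / 2) ^ (n - k) * ((1 - a) / 2) ^ (k + 1)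
            * (((n : ℝ) + 1) - 2 * ((k : ℝ) + 1)) ^ j)
          + (n.choose k : ℝ) * ((1 + a) / 2) ^ (n - k) * ((1 - a) / 2) ^ (k + 1)
            * (((n : ℝ) + 1) - 2 * ((k : ℝ) + 1)) ^ j := by
      intro k
      rw [Nat.choose_succ_succ n k]
      push_cast
      ring
    rw [PP, Finset.sum_range_succ']
    push_cast
    rw [Finset.sum_congr rfl fun k _ => hF k, Finset.sum_add_distrib]
    have hG : (∑ k ∈ range (n + 1),
          (n.choose (k + 1) : ℝ) * ((1 + a) / 2) ^ (n - k) * ((1 - a) / 2) ^ (k + 1)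
            * (((n : ℝ) + 1) - 2 * ((k : ℝ) + 1)) ^ j)
        + ((1 + a) / 2) ^ (n + 1) * (((n : ℝ) + 1)) ^ j
        = ∑ k ∈ range (n + 1), (n.choose k : ℝ) * ((1 + a) / 2) ^ (n + 1 - k)
            * ((1 - a) / 2) ^ k * (((n : ℝ) + 1) - 2 * k) ^ j := by
      have hg : ∀ k, ((fun k => (n.choose k : ℝ) * ((1 + a) / 2) ^ (n + 1 - k)
            * ((1 - a) / 2) ^ k * (((n : ℝ) + 1) - 2 * (k : ℝ)) ^ j) (k + 1))
          = (n.choose (k + 1) : ℝ) * ((1 + a) / 2) ^ (n - k) * ((1 - a) / 2) ^ (k + 1)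
            * (((n : ℝ) + 1) - 2 * ((k : ℝ) + 1)) ^ j := by
        intro k
        simp only [Nat.succ_sub_succ]
        push_cast
        ring
      rw [← Finset.sum_congr rfl fun k _ => hg k]
      set f := fun k : ℕ => (n.choose k : ℝ) * ((1 + a) / 2) ^ (n + 1 - k)
            * ((1 - a) / 2) ^ k * (((n : ℝ) + 1) - 2 * (k : ℝ)) ^ j with hf
      have h0 : f 0 = ((1 + a) / 2) ^ (n + 1) * (((n : ℝ) + 1)) ^ j := by simp [hf]
      have htop : f (n + 1) = 0 := by simp [hf, Nat.choose_succ_self]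
      have h1 := Finset.sum_range_succ' f (n + 1)
      have h2 := Finset.sum_range_succ f (n + 1)
      linarith
    norm_num
    linarith [hG]
  have hA : (∑ k ∈ range (n + 1), (n.choose k : ℝ) * ((1 + a) / 2) ^ (n + 1 - k)
        * ((1 - a) / 2) ^ k * (((n : ℝ) + 1) - 2 * k) ^ j)
      = ∑ i ∈ range (j + 1), (j.choose i : ℝ) * ((1 + a) / 2) * PP a n i := by
    have hterm : ∀ k ∈ range (n + 1), (n.choose k : ℝ) * ((1 + a) / 2) ^ (n + 1 - k)
          * ((1 - a) / 2) ^ k * (((n : ℝ) + 1) - 2 * k) ^ j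
        = ∑ i ∈ range (j + 1), (j.choose i : ℝ) * ((1 + a) / 2)
            * ((n.choose k : ℝ) * ((1 + a) / 2) ^ (n - k) * ((1 - a) / 2) ^ k
                * ((n : ℝ) - 2 * k) ^ i) := by
      intro k hk
      have hk' : k ≤ n := Nat.lt_succ_iff.mp (mem_range.mp hk)
      have hp : ((1 + a) / 2) ^ (n + 1 - k) = ((1 + a) / 2) * ((1 + a) / 2) ^ (n - k) := by
        have h : n + 1 - k = (n - k) + 1 := by omega
        rw [h, pow_succ]; ring
      have hx : (((n : ℝ) + 1) - 2 * k) ^ j = (((n : ℝ) - 2 * k) + 1) ^ j := by ring_nf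
      rw [hp, hx, add_pow, Finset.mul_sum]
      refine Finset.sum_congr rfl fun i _ => ?_
      ring
    rw [Finset.sum_congr rfl hterm, Finset.sum_comm]
    refine Finset.sum_congr rfl fun i _ => ?_
    rw [PP, Finset.mul_sum]
  have hB : (∑ k ∈ range (n + 1), (n.choose k : ℝ) * ((1 + a) / 2) ^ (n - k)
        * ((1 - a) / 2) ^ (k + 1) * (((n : ℝ) + 1) - 2 * ((k : ℝ) + 1)) ^ j)
      = ∑ i ∈ range (j + 1), (j.choose i : ℝ) * ((-1 : ℝ) ^ (j - i) * ((1 - a) / 2))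
          * PP a n i := by
    have hterm : ∀ k ∈ range (n + 1), (n.choose k : ℝ) * ((1 + a) / 2) ^ (n - k)
          * ((1 - a) / 2) ^ (k + 1) * (((n : ℝ) + 1) - 2 * ((k : ℝ) + 1)) ^ j
        = ∑ i ∈ range (j + 1), (j.choose i : ℝ) * ((-1 : ℝ) ^ (j - i) * ((1 - a) / 2))
            * ((n.choose k : ℝ) * ((1 + a) / 2) ^ (n - k) * ((1 - a) / 2) ^ k
                * ((n : ℝ) - 2 * k) ^ i) := by
      intro k hk
      have hx : (((n : ℝ) + 1) - 2 * ((k : ℝ) + 1)) ^ j = (((n : ℝ) - 2 * k) + (-1)) ^ j := by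
        ring_nf
      rw [hx, add_pow, Finset.mul_sum]
      refine Finset.sum_congr rfl fun i _ => ?_
      rw [pow_succ]
      ring
    rw [Finset.sum_congr rfl hterm, Finset.sum_comm]
    refine Finset.sum_congr rfl fun i _ => ?_
    rw [PP, Finset.mul_sum]
  rw [hsplit, hA, hB, ← Finset.sum_add_distrib]
  refine Finset.sum_congr rfl fun i _ => ?_
  rw [cc]
  ring

lemma PP_zero_eq (a : ℝ) (j : ℕ) : PP a 0 j = (0 : ℝ) ^ j := by
  simp [PP]

lemma cc_nonneg {a : ℝ} (ha : 1 ≤ a) (m : ℕ) : 0 ≤ cc a m := by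
  rcases Nat.even_or_odd m with h | h
  · rw [cc_even h]; norm_num
  · rw [cc_odd h]; linarith

lemma cc_le {a : ℝ} (ha : 1 ≤ a) (m : ℕ) : cc a m ≤ a ^ m := by
  rcases Nat.even_or_odd m with h | h
  · rw [cc_even h]; exact one_le_pow₀ ha
  · rw [cc_odd h]; exact le_self_pow₀ ha h.pos.ne'

lemma PP_nonneg {a : ℝ} (ha : 1 ≤ a) : ∀ n j, 0 ≤ PP a n j := by
  intro n
  induction n with
  | zero => intro j; rw [PP_zero_eq]; exact pow_nonneg le_rfl j
  | succ n ih =>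
    intro j
    rw [PP_rec]
    exact Finset.sum_nonneg fun i _ =>
      mul_nonneg (mul_nonneg (Nat.cast_nonneg _) (cc_nonneg ha _)) (ih i)

lemma PP_le {a : ℝ} (ha : 1 ≤ a) : ∀ n j, PP a n j ≤ (a * n) ^ j := by
  intro n
  induction n with
  | zero => intro j; rw [PP_zero_eq]; simp
  | succ n ih =>
    intro j
    rw [PP_rec]
    have ha0 : (0 : ℝ) ≤ a := le_trans zero_le_one ha
    calc ∑ i ∈ range (j + 1), (j.choose i : ℝ) * cc a (j - i) * PP a n i
        ≤ ∑ i ∈ range (j + 1), (a * n) ^ i * a ^ (j - i) * (j.choose i : ℝ) := by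
          refine Finset.sum_le_sum fun i _ => ?_
          have step1 : (j.choose i : ℝ) * cc a (j - i) ≤ (j.choose i : ℝ) * a ^ (j - i) :=
            mul_le_mul_of_nonneg_left (cc_le ha _) (Nat.cast_nonneg _)
          have step2 : (j.choose i : ℝ) * cc a (j - i) * PP a n i
              ≤ (j.choose i : ℝ) * a ^ (j - i) * (a * n) ^ i :=
            mul_le_mul step1 (ih i) (PP_nonneg ha n i)
              (mul_nonneg (Nat.cast_nonneg _) (pow_nonneg ha0 _))
          calc (j.choose i : ℝ) * cc a (j - i) * PP a n i
              ≤ (j.choose i : ℝ) * a ^ (j - i) * (a * n) ^ i := step2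
            _ = (a * n) ^ i * a ^ (j - i) * (j.choose i : ℝ) := by ring
      _ = (a * n + a) ^ j := (add_pow _ _ _).symm
      _ = (a * ((n : ℝ) + 1)) ^ j := by ring_nf
      _ = (a * ((n + 1 : ℕ) : ℝ)) ^ j := by push_cast; ring

lemma desc_succ (n i : ℕ) :
    (n + 1).descFactorial (i + 1) = n.descFactorial (i + 1) + (i + 1) * n.descFactorial i := by
  rw [Nat.succ_descFactorial_succ, Nat.descFactorial_succ]
  rcases le_or_gt i n with h | h
  · have h2 : n + 1 = (n - i) + (i + 1) := by omega
    rw [h2, add_mul]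
  · rw [Nat.descFactorial_eq_zero_iff_lt.mpr h]
    simp

lemma PP_ge {a : ℝ} (ha : 1 ≤ a) : ∀ n j, a ^ j * (n.descFactorial j : ℝ) ≤ PP a n j := by
  intro n
  induction n with
  | zero =>
    intro j
    rw [PP_zero_eq]
    cases j with
    | zero => simp
    | succ j => simp
  | succ n ih =>
    intro j
    rw [PP_rec]
    cases j with
    | zero =>
      have h0 := ih 0
      have hc : cc a 0 = 1 := cc_even Even.zero
      simp [hc]
      simpa using h0
    | succ i =>
      rw [Finset.sum_range_succ, Finset.sum_range_succ]
      have hrest : (0 : ℝ) ≤ ∑ t ∈ Finset.range i,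
          ((i + 1).choose t : ℝ) * cc a (i + 1 - t) * PP a n t :=
        Finset.sum_nonneg fun t _ =>
          mul_nonneg (mul_nonneg (Nat.cast_nonneg _) (cc_nonneg ha _)) (PP_nonneg ha n t)
      have htop : ((i + 1).choose (i + 1) : ℝ) * cc a (i + 1 - (i + 1)) * PP a n (i + 1)
          = PP a n (i + 1) := by
        simp [cc_even Even.zero]
      have hmid : ((i + 1).choose i : ℝ) * cc a (i + 1 - i) * PP a n i
          = ((i : ℝ) + 1) * a * PP a n i := by
        have h1 : i + 1 - i = 1 := by omega
        rw [Nat.choose_succ_self_right, h1, cc_odd odd_one]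
        push_cast
        ring
      rw [htop, hmid]
      have hih1 := ih (i + 1)
      have hih2 := ih i
      have hdesc : (((n + 1).descFactorial (i + 1) : ℕ) : ℝ)
          = (n.descFactorial (i + 1) : ℝ) + ((i : ℝ) + 1) * (n.descFactorial i : ℝ) := by
        rw [desc_succ]
        push_cast
        ring
      rw [hdesc]
      have hpow : a ^ (i + 1) = a ^ i * a := pow_succ a i
      have hmul : ((i : ℝ) + 1) * a * PP a n i ≥ ((i : ℝ) + 1) * a * (a ^ i * (n.descFactorial i : ℝ)) := by
        have hnn : (0 : ℝ) ≤ ((i : ℝ) + 1) * a := by positivity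
        exact mul_le_mul_of_nonneg_left hih2 hnn
      nlinarith [hrest, hih1, hmul]

noncomputable def ss (a : ℝ) (n j : ℕ) : ℝ := PP a n j / (n : ℝ) ^ j

lemma ss_nonneg {a : ℝ} (ha : 1 ≤ a) (n j : ℕ) : 0 ≤ ss a n j :=
  div_nonneg (PP_nonneg ha n j) (by positivity)

lemma ss_le {a : ℝ} (ha : 1 ≤ a) (n j : ℕ) : ss a n j ≤ a ^ j := by
  have ha0 : (0 : ℝ) ≤ a := le_trans zero_le_one ha
  rcases Nat.eq_zero_or_pos n with rfl | hn
  · cases j with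
    | zero => simp [ss, PP_zero_eq]
    | succ j =>
      have h : PP a 0 (j + 1) = 0 := by rw [PP_zero_eq]; simp
      rw [ss, h, zero_div]
      positivity
  · have hn' : (0 : ℝ) < (n : ℝ) := by exact_mod_cast hn
    have hp : (0 : ℝ) < (n : ℝ) ^ j := by positivity
    rw [ss, div_le_iff₀ hp]
    calc PP a n j ≤ (a * n) ^ j := PP_le ha n j
      _ = a ^ j * (n : ℝ) ^ j := mul_pow a _ j

lemma ss_ge {a : ℝ} (ha : 1 ≤ a) (n j : ℕ) :
    a ^ j * ((n.descFactorial j : ℝ) / (n : ℝ) ^ j) ≤ ss a n j := by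
  rcases Nat.eq_zero_or_pos n with rfl | hn
  · cases j with
    | zero => simp [ss, PP_zero_eq]
    | succ j =>
      have h : PP a 0 (j + 1) = 0 := by rw [PP_zero_eq]; simp
      rw [ss, h, zero_div]
      simp
  · have hn' : (0 : ℝ) < (n : ℝ) := by exact_mod_cast hn
    have hp : (0 : ℝ) < (n : ℝ) ^ j := by positivity
    rw [ss, mul_div_assoc']
    exact (div_le_div_iff_of_pos_right hp).mpr (PP_ge ha n j)

lemma tendsto_desc (j : ℕ) :
    Filter.Tendsto (fun n : ℕ => (n.descFactorial j : ℝ) / (n : ℝ) ^ j) Filter.atTop (nhds 1) := by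
  have h2 : Filter.Tendsto (fun n : ℕ => ∏ i ∈ range j, (((n : ℝ) - i) / n))
      Filter.atTop (nhds 1) := by
    have := tendsto_finset_prod (f := fun (i : ℕ) (n : ℕ) => ((n : ℝ) - i) / n)
      (x := Filter.atTop) (a := fun _ => (1 : ℝ)) (range j) (fun i _ => ?_)
    · simpa using this
    · have hbase : Filter.Tendsto (fun n : ℕ => 1 - (i : ℝ) / n) Filter.atTop (nhds 1) := by
        have := (tendsto_const_div_atTop_nhds_zero_nat (i : ℝ)).const_sub 1
        simpa using this
      refine hbase.congr' ?_
      filter_upwards [Filter.eventually_ge_atTop 1] with n hn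
      have hn' : ((n : ℝ)) ≠ 0 := by positivity
      field_simp
  refine h2.congr' ?_
  filter_upwards [Filter.eventually_ge_atTop j] with n hn
  rw [Nat.descFactorial_eq_prod_range, Finset.prod_div_distrib]
  congr 1
  · rw [Nat.cast_prod]
    refine Finset.prod_congr rfl fun i hi => ?_
    have hin : i ≤ n := le_trans (Nat.le_of_lt (Finset.mem_range.mp hi)) hn
    exact (Nat.cast_sub hin).symm
  · rw [Finset.prod_const, Finset.card_range]

lemma tendsto_ss {a : ℝ} (ha : 1 ≤ a) (j : ℕ) :
    Filter.Tendsto (fun n => ss a n j) Filter.atTop (nhds (a ^ j)) := by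
  have hlow : Filter.Tendsto (fun n : ℕ => a ^ j * ((n.descFactorial j : ℝ) / (n : ℝ) ^ j))
      Filter.atTop (nhds (a ^ j)) := by
    simpa using (tendsto_desc j).const_mul (a ^ j)
  refine tendsto_of_tendsto_of_tendsto_of_le_of_le' hlow tendsto_const_nhds ?_ ?_
  · filter_upwards with n
    exact ss_ge ha n j
  · filter_upwards with n
    exact ss_le ha n j

noncomputable def EE (a R : ℝ) (q : ℕ) (n : ℕ) : ℝ :=
  ∑' m : ℕ, R ^ m / m.factorial * (a ^ (q * m) - ss a n (q * m))

lemma bound_eq (a R : ℝ) (q : ℕ) (m : ℕ) :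
    R ^ m / m.factorial * a ^ (q * m) = (R * a ^ q) ^ m / m.factorial := by
  rw [pow_mul, mul_pow]
  ring

lemma summable_bound (a R : ℝ) (q : ℕ) :
    Summable (fun m : ℕ => R ^ m / m.factorial * a ^ (q * m)) := by
  refine Summable.congr (Real.summable_pow_div_factorial (R * a ^ q)) fun m => ?_
  rw [bound_eq]

lemma term_nonneg {a R : ℝ} (ha : 1 ≤ a) (hR : 0 ≤ R) (q n m : ℕ) :
    0 ≤ R ^ m / m.factorial * (a ^ (q * m) - ss a n (q * m)) := by
  apply mul_nonneg (by positivity)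
  have := ss_le ha n (q * m)
  linarith

lemma term_le {a R : ℝ} (ha : 1 ≤ a) (hR : 0 ≤ R) (q n m : ℕ) :
    R ^ m / m.factorial * (a ^ (q * m) - ss a n (q * m))
      ≤ R ^ m / m.factorial * a ^ (q * m) := by
  apply mul_le_mul_of_nonneg_left _ (by positivity)
  have := ss_nonneg ha n (q * m)
  linarith

lemma summable_EE {a R : ℝ} (ha : 1 ≤ a) (hR : 0 ≤ R) (q n : ℕ) :
    Summable (fun m : ℕ => R ^ m / m.factorial * (a ^ (q * m) - ss a n (q * m))) :=
  Summable.of_nonneg_of_le (term_nonneg ha hR q n) (term_le ha hR q n) (summable_bound a R q)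

lemma EE_tendsto {a R : ℝ} (ha : 1 ≤ a) (hR : 0 ≤ R) (q : ℕ) :
    Filter.Tendsto (EE a R q) Filter.atTop (nhds 0) := by
  have h := tendsto_tsum_of_dominated_convergence
    (𝓕 := Filter.atTop) (f := fun n m => R ^ m / m.factorial * (a ^ (q * m) - ss a n (q * m)))
    (g := fun _ : ℕ => (0 : ℝ)) (bound := fun m : ℕ => R ^ m / m.factorial * a ^ (q * m))
    (summable_bound a R q) ?_ ?_
  · show Filter.Tendsto (fun n => EE a R q n) _ _
    simpa [EE] using h
  · intro m
    have := (tendsto_ss ha (q * m)).const_sub (a ^ (q * m))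
    have h2 := this.const_mul (R ^ m / m.factorial)
    simpa using h2
  · filter_upwards with n m
    rw [Real.norm_eq_abs, abs_of_nonneg (term_nonneg ha hR q n m)]
    exact term_le ha hR q n m

lemma sum_pow_eq {a : ℝ} (n : ℕ) (hn : 1 ≤ n) (j : ℕ) :
    ∑ k ∈ Finset.range (n + 1),
        ((n.choose k : ℂ) * (((1 + a) / 2 : ℝ) : ℂ) ^ (n - k) * (((1 - a) / 2 : ℝ) : ℂ) ^ k)
          * (1 - 2 * (k : ℂ) / (n : ℂ)) ^ j
      = ((ss a n j : ℝ) : ℂ) := by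
  have hn0 : ((n : ℂ)) ≠ 0 := Nat.cast_ne_zero.mpr (by omega)
  have hnr : ((n : ℝ)) ≠ 0 := Nat.cast_ne_zero.mpr (by omega)
  calc ∑ k ∈ Finset.range (n + 1),
        ((n.choose k : ℂ) * (((1 + a) / 2 : ℝ) : ℂ) ^ (n - k) * (((1 - a) / 2 : ℝ) : ℂ) ^ k)
          * (1 - 2 * (k : ℂ) / (n : ℂ)) ^ j
      = ∑ k ∈ Finset.range (n + 1),
        (((n.choose k : ℝ) * ((1 + a) / 2) ^ (n - k) * ((1 - a) / 2) ^ k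
            * (((n : ℝ) - 2 * k) / n) ^ j : ℝ) : ℂ) := by
        refine Finset.sum_congr rfl fun k _ => ?_
        push_cast
        rw [show ((n : ℂ) - 2 * k) / n = 1 - 2 * (k : ℂ) / n from by rw [sub_div, div_self hn0]] <;> skip
    _ = ((∑ k ∈ Finset.range (n + 1), (n.choose k : ℝ) * ((1 + a) / 2) ^ (n - k)
            * ((1 - a) / 2) ^ k * (((n : ℝ) - 2 * k) / n) ^ j : ℝ) : ℂ) := by
        rw [Complex.ofReal_sum]
    _ = ((ss a n j : ℝ) : ℂ) := by
        congr 1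
        rw [ss, PP, Finset.sum_div]
        refine Finset.sum_congr rfl fun k _ => ?_
        simp only [div_pow]
        ring

lemma exp_tsum (u : ℂ) : Complex.exp u = ∑' m : ℕ, u ^ m / m.factorial := by
  rw [Complex.exp_eq_exp_ℂ, NormedSpace.exp_eq_tsum_div]

lemma summable_exp_term (c u : ℂ) : Summable (fun m : ℕ => c * (u ^ m / m.factorial)) :=
  (NormedSpace.expSeries_div_summable u).mul_left c

lemma Fn_eq {a : ℝ} (q n : ℕ) (hn : 1 ≤ n) (w : ℂ) :
    ∑ k ∈ Finset.range (n + 1),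
        ((n.choose k : ℂ) * (((1 + a) / 2 : ℝ) : ℂ) ^ (n - k) * (((1 - a) / 2 : ℝ) : ℂ) ^ k)
          * Complex.exp (w * (1 - 2 * (k : ℂ) / (n : ℂ)) ^ q)
      = ∑' m : ℕ, w ^ m / m.factorial * ((ss a n (q * m) : ℝ) : ℂ) := by
  have step1 : ∀ k ∈ Finset.range (n + 1),
      ((n.choose k : ℂ) * (((1 + a) / 2 : ℝ) : ℂ) ^ (n - k) * (((1 - a) / 2 : ℝ) : ℂ) ^ k)
          * Complex.exp (w * (1 - 2 * (k : ℂ) / (n : ℂ)) ^ q)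
        = ∑' m : ℕ, ((n.choose k : ℂ) * (((1 + a) / 2 : ℝ) : ℂ) ^ (n - k)
            * (((1 - a) / 2 : ℝ) : ℂ) ^ k)
          * ((w * (1 - 2 * (k : ℂ) / (n : ℂ)) ^ q) ^ m / m.factorial) := by
    intro k _
    rw [exp_tsum, ← tsum_mul_left]
  rw [Finset.sum_congr rfl step1]
  rw [← Summable.tsum_finsetSum (fun k _ => summable_exp_term _ _)]
  refine tsum_congr fun m => ?_
  have step2 : ∀ k,
      ((n.choose k : ℂ) * (((1 + a) / 2 : ℝ) : ℂ) ^ (n - k) * (((1 - a) / 2 : ℝ) : ℂ) ^ k)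
          * ((w * (1 - 2 * (k : ℂ) / (n : ℂ)) ^ q) ^ m / m.factorial)
        = w ^ m / m.factorial *
            (((n.choose k : ℂ) * (((1 + a) / 2 : ℝ) : ℂ) ^ (n - k)
              * (((1 - a) / 2 : ℝ) : ℂ) ^ k) * (1 - 2 * (k : ℂ) / (n : ℂ)) ^ (q * m)) := by
    intro k
    rw [mul_pow, ← pow_mul]
    ring
  rw [Finset.sum_congr rfl fun k _ => step2 k, ← Finset.mul_sum, sum_pow_eq n hn (q * m)]

lemma G_eq (a : ℝ) (q : ℕ) (w : ℂ) :
    Complex.exp (w * ((a : ℂ)) ^ q)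
      = ∑' m : ℕ, w ^ m / m.factorial * (((a ^ (q * m) : ℝ)) : ℂ) := by
  rw [exp_tsum]
  refine tsum_congr fun m => ?_
  rw [mul_pow, ← pow_mul]
  push_cast
  ring

lemma summable_Fn {a R : ℝ} (ha : 1 ≤ a) (hR : 0 ≤ R) (q n : ℕ) {w : ℂ} (hw : ‖w‖ ≤ R) :
    Summable fun m : ℕ => w ^ m / (m.factorial : ℂ) * ((ss a n (q * m) : ℝ) : ℂ) := by
  apply Summable.of_norm_bounded (summable_bound a R q)
  intro m
  rw [norm_mul, norm_div, norm_pow, Complex.norm_real, Complex.norm_natCast,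
    Real.norm_eq_abs, abs_of_nonneg (ss_nonneg ha n (q * m))]
  have h1 : ‖w‖ ^ m ≤ R ^ m := pow_le_pow_left₀ (norm_nonneg w) hw m
  have h2 := ss_le ha n (q * m)
  have h0 := ss_nonneg ha n (q * m)
  have h4 : (0 : ℝ) ≤ R ^ m / (m.factorial : ℝ) := by positivity
  exact mul_le_mul (by gcongr) h2 h0 h4

lemma summable_Gn {a R : ℝ} (ha : 1 ≤ a) (hR : 0 ≤ R) (q : ℕ) {w : ℂ} (hw : ‖w‖ ≤ R) :
    Summable fun m : ℕ => w ^ m / (m.factorial : ℂ) * (((a ^ (q * m) : ℝ)) : ℂ) := by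
  apply Summable.of_norm_bounded (summable_bound a R q)
  intro m
  have ha0 : (0 : ℝ) ≤ a := le_trans zero_le_one ha
  rw [norm_mul, norm_div, norm_pow, Complex.norm_real, Complex.norm_natCast,
    Real.norm_eq_abs, abs_of_nonneg (by positivity : (0:ℝ) ≤ a ^ (q * m))]
  have h1 : ‖w‖ ^ m ≤ R ^ m := pow_le_pow_left₀ (norm_nonneg w) hw m
  gcongr

lemma diff_le {a R : ℝ} (ha : 1 ≤ a) (hR : 0 ≤ R) (q n : ℕ) (hn : 1 ≤ n)
    {w : ℂ} (hw : ‖w‖ ≤ R) :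
    ‖(∑ k ∈ Finset.range (n + 1),
        ((n.choose k : ℂ) * (((1 + a) / 2 : ℝ) : ℂ) ^ (n - k) * (((1 - a) / 2 : ℝ) : ℂ) ^ k)
          * Complex.exp (w * (1 - 2 * (k : ℂ) / (n : ℂ)) ^ q))
        - Complex.exp (w * ((a : ℂ)) ^ q)‖ ≤ EE a R q n := by
  rw [Fn_eq q n hn w, G_eq, ← Summable.tsum_sub (summable_Fn ha hR q n hw) (summable_Gn ha hR q hw)]
  have hterm : ∀ m : ℕ, ‖w ^ m / (m.factorial : ℂ) * ((ss a n (q * m) : ℝ) : ℂ)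
        - w ^ m / (m.factorial : ℂ) * (((a ^ (q * m) : ℝ)) : ℂ)‖
      ≤ R ^ m / m.factorial * (a ^ (q * m) - ss a n (q * m)) := by
    intro m
    rw [← mul_sub, ← Complex.ofReal_sub, norm_mul, norm_div, norm_pow, Complex.norm_real,
      Complex.norm_natCast, Real.norm_eq_abs, abs_sub_comm,
      abs_of_nonneg (by linarith [ss_le ha n (q * m)] : (0:ℝ) ≤ a ^ (q * m) - ss a n (q * m))]
    have h1 : ‖w‖ ^ m ≤ R ^ m := pow_le_pow_left₀ (norm_nonneg w) hw m
    have h2 : (0 : ℝ) ≤ a ^ (q * m) - ss a n (q * m) := by linarith [ss_le ha n (q * m)]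
    have h3 : (0 : ℝ) ≤ ‖w‖ ^ m / (m.factorial : ℝ) := by positivity
    exact mul_le_mul_of_nonneg_right (by gcongr) h2
  have hnorms : Summable fun m : ℕ => ‖w ^ m / (m.factorial : ℂ) * ((ss a n (q * m) : ℝ) : ℂ)
      - w ^ m / (m.factorial : ℂ) * (((a ^ (q * m) : ℝ)) : ℂ)‖ :=
    Summable.of_nonneg_of_le (fun m => norm_nonneg _) hterm (summable_EE ha hR q n)
  calc ‖∑' m : ℕ, (w ^ m / (m.factorial : ℂ) * ((ss a n (q * m) : ℝ) : ℂ)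
        - w ^ m / (m.factorial : ℂ) * (((a ^ (q * m) : ℝ)) : ℂ))‖
      ≤ ∑' m : ℕ, ‖w ^ m / (m.factorial : ℂ) * ((ss a n (q * m) : ℝ) : ℂ)
        - w ^ m / (m.factorial : ℂ) * (((a ^ (q * m) : ℝ)) : ℂ)‖ :=
        norm_tsum_le_tsum_norm hnorms
    _ ≤ EE a R q n := Summable.tsum_le_tsum hterm hnorms (summable_EE ha hR q n)


/-- Fix `ħ > 0`, `d ≥ 1`, `p ∈ ℝ^d`, `a > 1` and an even positive integer `q`.
The sequence `Y_n(x) = ∑_{k=0}^{n} C_k(n,a) · exp(i·(p·x)·(−i)^q·(1 − 2k/n)^q/ħ)`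
converges pointwise on `ℝ^d` to `Y(x) = exp(i·(p·x)·(−i·a)^q/ħ)` as `n → ∞`,
uniformly on every compact subset of `ℝ^d`. -/
theorem superoscillation_convergence_even_power
    (hbar : ℝ) (hhbar : 0 < hbar) (d : ℕ) (hd : 1 ≤ d)
    (p : EuclideanSpace ℝ (Fin d)) (a : ℝ) (ha : 1 < a)
    (q : ℕ) (hq : Even q) (hq0 : 0 < q)
    (Y : ℕ → EuclideanSpace ℝ (Fin d) → ℂ)
    (hY : ∀ (n : ℕ) (x : EuclideanSpace ℝ (Fin d)),
      Y n x = ∑ k ∈ Finset.range (n + 1),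
        ((n.choose k : ℂ) * (((1 + a) / 2 : ℝ) : ℂ) ^ (n - k)
            * (((1 - a) / 2 : ℝ) : ℂ) ^ k)
          * Complex.exp (Complex.I * ((⟪p, x⟫ : ℝ) : ℂ) * (-Complex.I) ^ q
              * (1 - 2 * (k : ℂ) / (n : ℂ)) ^ q / (hbar : ℂ))) :
    (∀ x : EuclideanSpace ℝ (Fin d),
      Filter.Tendsto (fun n : ℕ => Y n x) Filter.atTop
        (nhds (Complex.exp (Complex.I * ((⟪p, x⟫ : ℝ) : ℂ)
          * (-Complex.I * (a : ℂ)) ^ q / (hbar : ℂ)))))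
    ∧ ∀ K : Set (EuclideanSpace ℝ (Fin d)), IsCompact K →
        TendstoUniformlyOn (fun n x => Y n x)
          (fun x => Complex.exp (Complex.I * ((⟪p, x⟫ : ℝ) : ℂ)
            * (-Complex.I * (a : ℂ)) ^ q / (hbar : ℂ)))
          Filter.atTop K := by
  have ha1 : (1 : ℝ) ≤ a := le_of_lt ha
  set w : EuclideanSpace ℝ (Fin d) → ℂ :=
    fun x => Complex.I * ((⟪p, x⟫ : ℝ) : ℂ) * (-Complex.I) ^ q / (hbar : ℂ) with hw
  have hYn : ∀ n x, Y n x = ∑ k ∈ Finset.range (n + 1),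
      ((n.choose k : ℂ) * (((1 + a) / 2 : ℝ) : ℂ) ^ (n - k)
          * (((1 - a) / 2 : ℝ) : ℂ) ^ k)
        * Complex.exp (w x * (1 - 2 * (k : ℂ) / (n : ℂ)) ^ q) := by
    intro n x
    rw [hY]
    refine Finset.sum_congr rfl fun k _ => ?_
    congr 1
    rw [hw]
    ring
  have hGx : ∀ x, Complex.exp (Complex.I * ((⟪p, x⟫ : ℝ) : ℂ)
      * (-Complex.I * (a : ℂ)) ^ q / (hbar : ℂ)) = Complex.exp (w x * ((a : ℂ)) ^ q) := by
    intro x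
    congr 1
    rw [hw, mul_pow]
    ring
  have hwnorm : ∀ x, ‖w x‖ = |⟪p, x⟫| / hbar := by
    intro x
    rw [hw]
    simp only [norm_div, norm_mul, norm_pow, norm_neg, Complex.norm_I, Complex.norm_real,
      Real.norm_eq_abs, one_pow, one_mul, Complex.norm_real]
    rw [abs_of_pos hhbar]
    ring
  have key : ∀ (R : ℝ), 0 ≤ R → ∀ n : ℕ, 1 ≤ n → ∀ x, ‖w x‖ ≤ R →
      ‖Y n x - Complex.exp (Complex.I * ((⟪p, x⟫ : ℝ) : ℂ)
        * (-Complex.I * (a : ℂ)) ^ q / (hbar : ℂ))‖ ≤ EE a R q n := by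
    intro R hR n hn x hwx
    rw [hYn n x, hGx x]
    exact diff_le ha1 hR q n hn hwx
  constructor
  · intro x
    rw [tendsto_iff_norm_sub_tendsto_zero]
    apply squeeze_zero' (Filter.Eventually.of_forall fun n => norm_nonneg _) ?_
      (EE_tendsto ha1 (norm_nonneg (w x)) q)
    filter_upwards [Filter.eventually_ge_atTop 1] with n hn
    exact key ‖w x‖ (norm_nonneg _) n hn x le_rfl
  · intro K hK
    obtain ⟨C, hC⟩ := hK.isBounded.exists_norm_le
    set R := max 0 (‖p‖ * C / hbar) with hRdef
    have hR : 0 ≤ R := le_max_left _ _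
    have hwK : ∀ x ∈ K, ‖w x‖ ≤ R := by
      intro x hx
      rw [hwnorm x]
      have h1 : |⟪p, x⟫| ≤ ‖p‖ * ‖x‖ := abs_real_inner_le_norm p x
      have h2 : ‖x‖ ≤ C := hC x hx
      have h3 : |⟪p, x⟫| / hbar ≤ ‖p‖ * C / hbar := by
        have h4 : |⟪p, x⟫| ≤ ‖p‖ * C :=
          le_trans h1 (mul_le_mul_of_nonneg_left h2 (norm_nonneg p))
        exact (div_le_div_iff_of_pos_right hhbar).mpr h4
      exact le_trans h3 (le_max_right _ _)
    rw [Metric.tendstoUniformlyOn_iff]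
    intro ε hε
    have h1 : ∀ᶠ n in Filter.atTop, EE a R q n < ε :=
      (EE_tendsto ha1 hR q).eventually_lt_const hε
    filter_upwards [h1, Filter.eventually_ge_atTop 1] with n hn1 hn2
    intro x hx
    rw [dist_comm, dist_eq_norm]
    exact lt_of_le_of_lt (key R hR n hn2 x (hwK x hx)) hn1
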